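/- If a vector v satisfies ⟨v, w⟩ ≤ 0 for all w in the tangent cone T_C(x̄), then v ∈ N̂_C(x̄); i.e., T_C(x̄)° ⊆ N̂_C(x̄). -/

import Mathlib

/-- The regular (Fréchet) normal cone of `C` at `x₀`, via the ε–δ definition. -/
def regNormalCone {E : Type*} [NormedAddCommGroup E] [InnerProductSpace ℝ E]
    (C : Set E) (x₀ : E) : Set E :=
  {v | ∀ ε > (0 : ℝ), ∃ δ > (0 : ℝ), ∀ x ∈ C, 0 < ‖x - x₀‖ → ‖x - x₀‖ ≤ δ →
    (inner ℝ v (x - x₀) : ℝ) ≤ ε * ‖x - x₀‖}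

/-- The tangent (contingent) cone of `C` at `x₀`: limits of `(xₖ - x₀)/αₖ` with
`xₖ ∈ C`, `xₖ → x₀`, `αₖ ↓ 0`. -/
def tangentConeAt' {E : Type*} [NormedAddCommGroup E] [InnerProductSpace ℝ E]
    (C : Set E) (x₀ : E) : Set E :=
  {w | ∃ (xs : ℕ → E) (a : ℕ → ℝ), (∀ k, xs k ∈ C) ∧
    Filter.Tendsto xs Filter.atTop (nhds x₀) ∧
    (∀ k, 0 < a k) ∧ Filter.Tendsto a Filter.atTop (nhds 0) ∧
    Filter.Tendsto (fun k => (a k)⁻¹ • (xs k - x₀)) Filter.atTop (nhds w)}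

/-- The polar of a set. -/
def polarSet {E : Type*} [NormedAddCommGroup E] [InnerProductSpace ℝ E]
    (A : Set E) : Set E :=
  {v | ∀ x ∈ A, (inner ℝ v x : ℝ) ≤ 0}

theorem polar_tangentCone_subset_regNormalCone {n : ℕ}
    (C : Set (EuclideanSpace ℝ (Fin n))) (x₀ : EuclideanSpace ℝ (Fin n)) (hx : x₀ ∈ C)
    (v : EuclideanSpace ℝ (Fin n))
    (hv : ∀ w ∈ tangentConeAt' C x₀, (inner ℝ v w : ℝ) ≤ 0) :
    v ∈ regNormalCone C x₀ := by
  intro ε hε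
  by_contra h
  push_neg at h
  have hsel : ∀ k : ℕ, ∃ x ∈ C, 0 < ‖x - x₀‖ ∧ ‖x - x₀‖ ≤ 1 / (k + 1) ∧
      ε * ‖x - x₀‖ < (inner ℝ v (x - x₀) : ℝ) := by
    intro k
    exact h (1 / (k + 1)) (by positivity)
  choose xs hxsC hpos hle hineq using hsel
  set a : ℕ → ℝ := fun k => ‖xs k - x₀‖ with ha
  have ha0 : Filter.Tendsto a Filter.atTop (nhds 0) := by
    refine squeeze_zero (fun k => norm_nonneg _) hle ?_
    exact tendsto_one_div_add_atTop_nhds_zero_nat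
  have hxs0 : Filter.Tendsto xs Filter.atTop (nhds x₀) :=
    tendsto_iff_norm_sub_tendsto_zero.2 ha0
  set w : ℕ → EuclideanSpace ℝ (Fin n) := fun k => (a k)⁻¹ • (xs k - x₀) with hw
  have hwnorm : ∀ k, w k ∈ Metric.sphere (0 : EuclideanSpace ℝ (Fin n)) 1 := by
    intro k
    simp only [mem_sphere_iff_norm, sub_zero, hw, norm_smul, norm_inv, Real.norm_eq_abs,
      abs_of_pos (hpos k)]
    show |‖xs k - x₀‖|⁻¹ * ‖xs k - x₀‖ = 1
    rw [abs_of_pos (hpos k)]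
    exact inv_mul_cancel₀ (ne_of_gt (hpos k))
  obtain ⟨w₀, -, φ, hφ, hlim⟩ :=
    (isCompact_sphere (0 : EuclideanSpace ℝ (Fin n)) 1).tendsto_subseq hwnorm
  have hmem : w₀ ∈ tangentConeAt' C x₀ := by
    refine ⟨xs ∘ φ, a ∘ φ, fun k => hxsC (φ k), hxs0.comp hφ.tendsto_atTop,
      fun k => hpos (φ k), ha0.comp hφ.tendsto_atTop, hlim⟩
  have hle0 : (inner ℝ v w₀ : ℝ) ≤ 0 := hv w₀ hmem
  have hkey : ∀ k, ε ≤ (inner ℝ v (w (φ k)) : ℝ) := by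
    intro k
    have h1 : (inner ℝ v (w (φ k)) : ℝ) = (a (φ k))⁻¹ * inner ℝ v (xs (φ k) - x₀) :=
      real_inner_smul_right v _ _
    rw [h1, le_inv_mul_iff₀ (hpos (φ k))]
    have := (hineq (φ k)).le
    linarith [this, (mul_comm ε (a (φ k)) ▸ this : ε * a (φ k) ≤ inner ℝ v (xs (φ k) - x₀))]
  have htend : Filter.Tendsto (fun k => (inner ℝ v (w (φ k)) : ℝ)) Filter.atTop
      (nhds (inner ℝ v w₀ : ℝ)) := (Filter.Tendsto.inner tendsto_const_nhds hlim)
  have : ε ≤ (inner ℝ v w₀ : ℝ) := ge_of_tendsto' htend hkey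
  linarith
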